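/- If π, π' ∈ S_r are chosen independently and uniformly at random, then P(LCS(π, π') > 3√r) ≤ r^{−ω(1)}; that is, for every constant C > 0 there exists r_0 such that for all r ≥ r_0, the probability that LCS(π, π') > 3√r is at most r^{−C}. -/

import Mathlib

/-- `LCS(π, π')`: the length of a longest common subsequence of the permutations
`π, π'` of `[r]`, i.e. the largest `ℓ` for which there are `A = {a_1 < … < a_ℓ}` and
`B = {b_1 < … < b_ℓ}` (not necessarily disjoint) with `π(a_t) = π'(b_t)` for all `t`. -/
noncomputable def permLCS {r : ℕ} (π π' : Equiv.Perm (Fin r)) : ℕ :=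
  sSup {ℓ : ℕ | ∃ a b : Fin ℓ → Fin r, StrictMono a ∧ StrictMono b ∧
    ∀ t : Fin ℓ, π (a t) = π' (b t)}

lemma aux_card_strictMono_le (ℓ r : ℕ) :
    ((Finset.univ.filter fun f : Fin ℓ → Fin r => StrictMono f)).card ≤ r.choose ℓ := by
  classical
  have h : ∀ f ∈ Finset.univ.filter fun f : Fin ℓ → Fin r => StrictMono f,
      (Finset.image f Finset.univ) ∈ (Finset.univ : Finset (Fin r)).powersetCard ℓ := by
    intro f hf
    rw [Finset.mem_filter] at hf
    rw [Finset.mem_powersetCard]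
    exact ⟨Finset.subset_univ _, by
      rw [Finset.card_image_of_injective _ hf.2.injective, Finset.card_univ, Fintype.card_fin]⟩
  have := Finset.card_le_card_of_injOn (fun f => Finset.image f Finset.univ) h ?_
  · simpa [Finset.card_powersetCard] using this
  · intro f hf g hg hfg
    simp only [Finset.coe_filter, Finset.mem_univ, Set.mem_setOf_eq, true_and] at hf hg
    have hcf : (Finset.image f Finset.univ).card = ℓ := by
      rw [Finset.card_image_of_injective _ hf.injective, Finset.card_univ, Fintype.card_fin]
    have hcg : (Finset.image g Finset.univ).card = ℓ := by
      rw [Finset.card_image_of_injective _ hg.injective, Finset.card_univ, Fintype.card_fin]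
    have h1 := Finset.orderEmbOfFin_unique hcf
      (fun x => Finset.mem_image_of_mem f (Finset.mem_univ x)) hf
    have h2 := Finset.orderEmbOfFin_unique hcg
      (fun x => Finset.mem_image_of_mem g (Finset.mem_univ x)) hg
    have key : ∀ {s t : Finset (Fin r)} (hs : s.card = ℓ) (ht : t.card = ℓ), s = t →
        ⇑(s.orderEmbOfFin hs) = ⇑(t.orderEmbOfFin ht) := by
      rintro s t hs ht rfl; rfl
    exact h1.trans ((key hcf hcg hfg).trans h2.symm)

lemma aux_card_fixed_perm_le {ℓ r : ℕ} {a b : Fin ℓ → Fin r}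
    (ha : Function.Injective a) (hb : Function.Injective b) :
    ((Finset.univ.filter fun σ : Equiv.Perm (Fin r) => ∀ t, σ (a t) = b t)).card
      ≤ (r - ℓ).factorial := by
  classical
  set A : Set (Fin r) := (Set.range a)ᶜ with hAdef
  set B : Set (Fin r) := (Set.range b)ᶜ with hBdef
  have hA : Fintype.card A = r - ℓ := by
    rw [Fintype.card_compl_set, Set.card_range_of_injective ha, Fintype.card_fin,
      Fintype.card_fin]
  have hB : Fintype.card B = r - ℓ := by
    rw [Fintype.card_compl_set, Set.card_range_of_injective hb, Fintype.card_fin,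
      Fintype.card_fin]
  have hmemB : ∀ (σ : Equiv.Perm (Fin r)), (∀ t, σ (a t) = b t) → ∀ x : A, σ x.1 ∈ B := by
    rintro σ hσ ⟨x, hx⟩
    simp only [hBdef, Set.mem_compl_iff, Set.mem_range, not_exists]
    rintro t ht
    rw [← hσ t] at ht
    exact hx ⟨t, σ.injective ht⟩
  set G : {σ : Equiv.Perm (Fin r) // ∀ t, σ (a t) = b t} → (A ↪ B) :=
    fun σ => ⟨fun x => ⟨σ.1 x.1, hmemB σ.1 σ.2 x⟩,
      fun x y hxy => Subtype.ext (σ.1.injective (congrArg Subtype.val hxy))⟩ with hG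
  have hGinj : Function.Injective G := by
    rintro ⟨σ, hσ⟩ ⟨τ, hτ⟩ h
    ext x
    by_cases hx : x ∈ Set.range a
    · obtain ⟨t, rfl⟩ := hx
      rw [hσ t, hτ t]
    · have := congrArg (fun e : A ↪ B => ((e ⟨x, hx⟩ : B) : Fin r)) h
      simp only [G, Function.Embedding.coeFn_mk] at this
      exact congrArg Fin.val this
  calc ((Finset.univ.filter fun σ : Equiv.Perm (Fin r) => ∀ t, σ (a t) = b t)).card
      = Fintype.card {σ : Equiv.Perm (Fin r) // ∀ t, σ (a t) = b t} := by
        rw [Fintype.card_subtype]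
    _ ≤ Fintype.card (A ↪ B) := Fintype.card_le_of_injective G hGinj
    _ = (r - ℓ).factorial := by
        rw [Fintype.card_embedding_eq, hA, hB, Nat.descFactorial_self]

lemma aux_card_pair_fixed_le {ℓ r : ℕ} {a b : Fin ℓ → Fin r}
    (ha : Function.Injective a) (hb : Function.Injective b) :
    ((Finset.univ.filter fun p : Equiv.Perm (Fin r) × Equiv.Perm (Fin r) =>
        ∀ t, p.1 (a t) = p.2 (b t))).card ≤ r.factorial * (r - ℓ).factorial := by
  classical
  set T := Finset.univ.filter fun σ : Equiv.Perm (Fin r) => ∀ t, σ (a t) = b t with hT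
  have hmap : ∀ p ∈ (Finset.univ.filter fun p : Equiv.Perm (Fin r) × Equiv.Perm (Fin r) =>
      ∀ t, p.1 (a t) = p.2 (b t)),
      (fun p : Equiv.Perm (Fin r) × Equiv.Perm (Fin r) => (p.1, p.2⁻¹ * p.1)) p ∈
        Finset.univ ×ˢ T := by
    intro p hp
    rw [Finset.mem_filter] at hp
    rw [Finset.mem_product, hT, Finset.mem_filter]
    refine ⟨Finset.mem_univ _, Finset.mem_univ _, fun t => ?_⟩
    rw [Equiv.Perm.mul_apply, hp.2 t]; exact Equiv.symm_apply_apply _ _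
  have hinj : ∀ p ∈ (Finset.univ.filter fun p : Equiv.Perm (Fin r) × Equiv.Perm (Fin r) =>
      ∀ t, p.1 (a t) = p.2 (b t)), ∀ q ∈ (Finset.univ.filter fun p :
        Equiv.Perm (Fin r) × Equiv.Perm (Fin r) => ∀ t, p.1 (a t) = p.2 (b t)),
      (p.1, p.2⁻¹ * p.1) = (q.1, q.2⁻¹ * q.1) → p = q := by
    rintro ⟨p1, p2⟩ - ⟨q1, q2⟩ - h
    obtain ⟨h1, h2⟩ := Prod.mk.injEq .. ▸ h
    subst h1
    have : p2⁻¹ = q2⁻¹ := mul_right_cancel h2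
    simp only [Prod.mk.injEq, true_and]
    exact inv_injective this
  calc ((Finset.univ.filter fun p : Equiv.Perm (Fin r) × Equiv.Perm (Fin r) =>
        ∀ t, p.1 (a t) = p.2 (b t))).card
      ≤ (Finset.univ ×ˢ T).card := Finset.card_le_card_of_injOn _ hmap
        (fun p hp q hq h => hinj p hp q hq h)
    _ = Fintype.card (Equiv.Perm (Fin r)) * T.card := by
        rw [Finset.card_product, Finset.card_univ]
    _ ≤ r.factorial * (r - ℓ).factorial := by
        refine Nat.mul_le_mul ?_ (aux_card_fixed_perm_le ha hb)
        rw [Fintype.card_perm, Fintype.card_fin]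

lemma aux_card_event_le (r ℓ : ℕ) :
    ((Finset.univ.filter fun p : Equiv.Perm (Fin r) × Equiv.Perm (Fin r) =>
        ∃ a b : Fin ℓ → Fin r, StrictMono a ∧ StrictMono b ∧
          ∀ t, p.1 (a t) = p.2 (b t))).card
      ≤ r.choose ℓ * r.choose ℓ * (r.factorial * (r - ℓ).factorial) := by
  classical
  set T := Finset.univ.filter fun f : Fin ℓ → Fin r => StrictMono f with hT
  have hsub : (Finset.univ.filter fun p : Equiv.Perm (Fin r) × Equiv.Perm (Fin r) =>
        ∃ a b : Fin ℓ → Fin r, StrictMono a ∧ StrictMono b ∧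
          ∀ t, p.1 (a t) = p.2 (b t)) ⊆
      (T ×ˢ T).biUnion (fun ab => Finset.univ.filter
        fun p : Equiv.Perm (Fin r) × Equiv.Perm (Fin r) =>
          ∀ t, p.1 (ab.1 t) = p.2 (ab.2 t)) := by
    intro p hp
    rw [Finset.mem_filter] at hp
    obtain ⟨-, a, b, haM, hbM, hab⟩ := hp
    rw [Finset.mem_biUnion]
    exact ⟨(a, b), by
      rw [Finset.mem_product, hT]
      exact ⟨Finset.mem_filter.2 ⟨Finset.mem_univ _, haM⟩,
        Finset.mem_filter.2 ⟨Finset.mem_univ _, hbM⟩⟩,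
      Finset.mem_filter.2 ⟨Finset.mem_univ _, hab⟩⟩
  calc ((Finset.univ.filter fun p : Equiv.Perm (Fin r) × Equiv.Perm (Fin r) =>
        ∃ a b : Fin ℓ → Fin r, StrictMono a ∧ StrictMono b ∧
          ∀ t, p.1 (a t) = p.2 (b t))).card
      ≤ ((T ×ˢ T).biUnion (fun ab => Finset.univ.filter
          fun p : Equiv.Perm (Fin r) × Equiv.Perm (Fin r) =>
            ∀ t, p.1 (ab.1 t) = p.2 (ab.2 t))).card := Finset.card_le_card hsub
    _ ≤ ∑ ab ∈ T ×ˢ T, ((Finset.univ.filter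
          fun p : Equiv.Perm (Fin r) × Equiv.Perm (Fin r) =>
            ∀ t, p.1 (ab.1 t) = p.2 (ab.2 t))).card := Finset.card_biUnion_le
    _ ≤ ∑ _ab ∈ T ×ˢ T, r.factorial * (r - ℓ).factorial := by
        refine Finset.sum_le_sum fun ab hab => ?_
        rw [Finset.mem_product, hT, Finset.mem_filter, Finset.mem_filter] at hab
        exact aux_card_pair_fixed_le hab.1.2.injective hab.2.2.injective
    _ = (T ×ˢ T).card * (r.factorial * (r - ℓ).factorial) := by
        rw [Finset.sum_const, smul_eq_mul]
    _ ≤ r.choose ℓ * r.choose ℓ * (r.factorial * (r - ℓ).factorial) := by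
        refine Nat.mul_le_mul_right _ ?_
        rw [Finset.card_product]
        exact Nat.mul_le_mul (aux_card_strictMono_le ℓ r) (aux_card_strictMono_le ℓ r)

lemma aux_permLCS_witness {r : ℕ} (π π' : Equiv.Perm (Fin r)) {ℓ : ℕ}
    (h : ℓ ≤ permLCS π π') :
    ∃ a b : Fin ℓ → Fin r, StrictMono a ∧ StrictMono b ∧ ∀ t : Fin ℓ, π (a t) = π' (b t) := by
  set S := {m : ℕ | ∃ a b : Fin m → Fin r, StrictMono a ∧ StrictMono b ∧
    ∀ t : Fin m, π (a t) = π' (b t)} with hS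
  have h0 : (0 : ℕ) ∈ S := by
    refine ⟨Fin.elim0, Fin.elim0, ?_, ?_, ?_⟩ <;> (intro i; exact i.elim0)
  have hbdd : BddAbove S := by
    refine ⟨r, fun m hm => ?_⟩
    obtain ⟨a, -, ha, -, -⟩ := hm
    have := Fintype.card_le_of_injective a ha.injective
    rwa [Fintype.card_fin, Fintype.card_fin] at this
  have hmem : permLCS π π' ∈ S := Nat.sSup_mem ⟨0, h0⟩ hbdd
  obtain ⟨a, b, ha, hb, hab⟩ := hmem
  have hcast : StrictMono (Fin.castLE h) := fun i j hij => hij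
  exact ⟨a ∘ Fin.castLE h, b ∘ Fin.castLE h, ha.comp hcast, hb.comp hcast,
    fun t => hab _⟩

lemma aux_eventually_rpow_le (C : ℝ) (hC : 0 < C) :
    ∃ r₀ : ℕ, ∀ r : ℕ, r₀ ≤ r → (r : ℝ) ^ C ≤ (9 / Real.exp 1 ^ 2) ^ (3 * Real.sqrt r) := by
  set q : ℝ := 9 / Real.exp 1 ^ 2 with hqdef
  have he : Real.exp 1 ^ 2 < 9 := by
    have h1 : Real.exp 1 < 2.7182818286 := Real.exp_one_lt_d9
    nlinarith [Real.exp_pos 1]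
  have hepos : (0:ℝ) < Real.exp 1 ^ 2 := by positivity
  have hq1 : 1 < q := by
    rw [hqdef, lt_div_iff₀ hepos]; linarith
  have hq0 : 0 < q := lt_trans one_pos hq1
  have hlogq : 0 < Real.log q := Real.log_pos hq1
  have hlt := isLittleO_log_rpow_atTop (show (0:ℝ) < 1/2 by norm_num)
  have hev := hlt.def (show (0:ℝ) < 3 * Real.log q / C by positivity)
  rw [Filter.eventually_atTop] at hev
  obtain ⟨x₀, hx₀⟩ := hev
  refine ⟨max 1 ⌈x₀⌉₊, fun r hr => ?_⟩
  have hr1n : 1 ≤ r := le_trans (le_max_left _ _) hr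
  have hr1 : (1:ℝ) ≤ (r:ℝ) := by exact_mod_cast hr1n
  have hr0 : (0:ℝ) < (r:ℝ) := lt_of_lt_of_le one_pos hr1
  have hrx : x₀ ≤ (r:ℝ) :=
    le_trans (Nat.le_ceil x₀) (Nat.cast_le.mpr (le_trans (le_max_right _ _) hr))
  have hbound := hx₀ r hrx
  rw [Real.norm_eq_abs, Real.norm_eq_abs, abs_of_nonneg (Real.log_nonneg hr1),
    abs_of_nonneg (Real.rpow_nonneg hr0.le _)] at hbound
  rw [← Real.sqrt_eq_rpow] at hbound
  have hkey : C * Real.log r ≤ 3 * Real.sqrt r * Real.log q := by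
    have h2 := mul_le_mul_of_nonneg_left hbound hC.le
    have h3 : C * (3 * Real.log q / C * Real.sqrt r) = 3 * Real.sqrt r * Real.log q := by
      field_simp
    linarith
  rw [Real.rpow_def_of_pos hr0, Real.rpow_def_of_pos hq0]
  exact Real.exp_le_exp.mpr (by rw [mul_comm (Real.log r) C, mul_comm (Real.log q)]; exact hkey)

open Classical in
/-- If `π, π' ∈ S_r` are independent uniformly random permutations then
`P(LCS(π, π') > 3√r) ≤ r^{−ω(1)}`: for every `C > 0` there is `r₀` such that for all
`r ≥ r₀` the proportion of pairs with `LCS(π, π') > 3√r` is at most `r^{−C}`. -/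
theorem prob_LCS_large_superpolynomial :
    ∀ C : ℝ, 0 < C → ∃ r₀ : ℕ, ∀ r : ℕ, r₀ ≤ r →
      ((Finset.univ.filter fun p : Equiv.Perm (Fin r) × Equiv.Perm (Fin r) =>
          (3 * Real.sqrt r : ℝ) < (permLCS p.1 p.2 : ℝ)).card : ℝ) ≤
        (r : ℝ) ^ (-C) * (r.factorial : ℝ) ^ 2 := by
  intro C hC
  obtain ⟨r₁, hr₁⟩ := aux_eventually_rpow_le C hC
  refine ⟨max 16 r₁, fun r hr => ?_⟩
  have h16 : 16 ≤ r := le_trans (le_max_left _ _) hr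
  have hr₁r : r₁ ≤ r := le_trans (le_max_right _ _) hr
  have hrpos : 0 < r := lt_of_lt_of_le (by norm_num) h16
  have hr0 : (0:ℝ) < (r:ℝ) := by exact_mod_cast hrpos
  have h16' : (16:ℝ) ≤ (r:ℝ) := by exact_mod_cast h16
  set ℓ : ℕ := ⌊3 * Real.sqrt r⌋₊ + 1 with hℓdef
  have hsqrt_nonneg : (0:ℝ) ≤ 3 * Real.sqrt r := by positivity
  have hℓ_gt : 3 * Real.sqrt r < (ℓ : ℝ) := by
    rw [hℓdef]; push_cast; exact Nat.lt_floor_add_one _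
  have hsqrt_le : Real.sqrt r ≤ (r:ℝ)/4 := by
    have h4 : (4:ℝ) ≤ Real.sqrt r := by
      have : Real.sqrt 16 ≤ Real.sqrt r := Real.sqrt_le_sqrt h16'
      rwa [show (16:ℝ) = 4^2 by norm_num, Real.sqrt_sq (by norm_num : (0:ℝ) ≤ 4)] at this
    nlinarith [Real.sq_sqrt hr0.le, Real.sqrt_nonneg (r:ℝ)]
  have hℓr : ℓ ≤ r := by
    have hcast : (ℓ:ℝ) ≤ (r:ℝ) := by
      rw [hℓdef]; push_cast
      have hfl : (⌊3 * Real.sqrt r⌋₊ : ℝ) ≤ 3 * Real.sqrt r := Nat.floor_le hsqrt_nonneg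
      nlinarith
    exact_mod_cast hcast
  have hsub : (Finset.univ.filter fun p : Equiv.Perm (Fin r) × Equiv.Perm (Fin r) =>
      (3 * Real.sqrt r : ℝ) < (permLCS p.1 p.2 : ℝ)) ⊆
      (Finset.univ.filter fun p : Equiv.Perm (Fin r) × Equiv.Perm (Fin r) =>
        ∃ a b : Fin ℓ → Fin r, StrictMono a ∧ StrictMono b ∧
          ∀ t, p.1 (a t) = p.2 (b t)) := by
    intro p hp
    rw [Finset.mem_filter] at hp ⊢
    refine ⟨Finset.mem_univ _, ?_⟩
    have hfloor : ⌊3 * Real.sqrt r⌋₊ < permLCS p.1 p.2 := by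
      rw [Nat.floor_lt hsqrt_nonneg]
      exact_mod_cast hp.2
    exact aux_permLCS_witness p.1 p.2 hfloor
  have hcard := le_trans (Finset.card_le_card hsub) (aux_card_event_le r ℓ)
  have hcastcard : ((Finset.univ.filter fun p : Equiv.Perm (Fin r) × Equiv.Perm (Fin r) =>
        (3 * Real.sqrt r : ℝ) < (permLCS p.1 p.2 : ℝ)).card : ℝ) ≤
      (r.choose ℓ : ℝ) * (r.choose ℓ : ℝ) *
        ((r.factorial : ℝ) * ((r - ℓ).factorial : ℝ)) := by exact_mod_cast hcard
  -- analytic bounds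
  set q : ℝ := 9 / Real.exp 1 ^ 2 with hqdef
  have he : Real.exp 1 ^ 2 < 9 := by
    have h1 : Real.exp 1 < 2.7182818286 := Real.exp_one_lt_d9
    nlinarith [Real.exp_pos 1]
  have hepos : (0:ℝ) < Real.exp 1 ^ 2 := by positivity
  have hq1 : 1 < q := by rw [hqdef, lt_div_iff₀ hepos]; linarith
  have hq0 : 0 < q := one_pos.trans hq1
  have hrC : (r:ℝ) ^ C ≤ q ^ (3 * Real.sqrt r) := hr₁ r hr₁r
  have hqℓ : q ^ ((3:ℝ) * Real.sqrt r) ≤ q ^ (ℓ:ℕ) := by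
    rw [← Real.rpow_natCast q ℓ]
    exact (Real.rpow_le_rpow_left_iff hq1).mpr hℓ_gt.le
  have hfactpos : (0:ℝ) < (ℓ.factorial : ℝ) := by exact_mod_cast ℓ.factorial_pos
  have hfact' : ((ℓ:ℝ))^ℓ ≤ (ℓ.factorial : ℝ) * Real.exp 1 ^ ℓ := by
    have hfact : ((ℓ:ℝ))^ℓ / (ℓ.factorial : ℝ) ≤ Real.exp ℓ :=
      Real.pow_div_factorial_le_exp (ℓ:ℝ) (by positivity) ℓ
    have hexpℓ : Real.exp (ℓ:ℝ) = Real.exp 1 ^ ℓ := by rw [← Real.exp_nat_mul, mul_one]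
    rw [div_le_iff₀ hfactpos, hexpℓ] at hfact
    linarith
  have hsq : (9:ℝ) * r ≤ ((ℓ:ℝ))^2 := by
    have h1 : (3*Real.sqrt r)^2 = 9 * r := by
      rw [mul_pow, Real.sq_sqrt hr0.le]; norm_num
    nlinarith [hℓ_gt, hsqrt_nonneg]
  have hmain : (r:ℝ)^C * (r:ℝ)^ℓ ≤ ((ℓ.factorial : ℝ))^2 := by
    have h1 : (r:ℝ)^C * (r:ℝ)^ℓ ≤ q^ℓ * (r:ℝ)^ℓ :=
      mul_le_mul_of_nonneg_right (le_trans hrC hqℓ) (by positivity)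
    have h2 : q^ℓ * (r:ℝ)^ℓ = (9 * (r:ℝ) / Real.exp 1 ^ 2)^ℓ := by
      rw [← mul_pow, hqdef]
      congr 1
      ring
    have h3 : (9 * (r:ℝ) / Real.exp 1 ^ 2)^ℓ ≤ ((ℓ:ℝ)^2 / Real.exp 1 ^ 2)^ℓ := by
      gcongr
    have h4 : ((ℓ:ℝ)^2 / Real.exp 1 ^ 2)^ℓ = ((ℓ:ℝ)^ℓ / Real.exp 1 ^ ℓ)^2 := by
      rw [div_pow, div_pow, ← pow_mul, ← pow_mul, ← pow_mul, ← pow_mul, mul_comm 2 ℓ]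
    have h5 : ((ℓ:ℝ)^ℓ / Real.exp 1 ^ ℓ)^2 ≤ ((ℓ.factorial:ℝ))^2 := by
      gcongr ?_ ^ 2
      rw [div_le_iff₀ (by positivity)]
      exact hfact'
    calc (r:ℝ)^C * (r:ℝ)^ℓ ≤ q^ℓ * (r:ℝ)^ℓ := h1
      _ = (9 * (r:ℝ) / Real.exp 1 ^ 2)^ℓ := h2
      _ ≤ ((ℓ:ℝ)^2 / Real.exp 1 ^ 2)^ℓ := h3
      _ = ((ℓ:ℝ)^ℓ / Real.exp 1 ^ ℓ)^2 := h4
      _ ≤ ((ℓ.factorial:ℝ))^2 := h5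
  have hrCpos : (0:ℝ) < (r:ℝ)^C := Real.rpow_pos_of_pos hr0 C
  have hchoose : (r.choose ℓ : ℝ) ≤ (r:ℝ)^ℓ / (ℓ.factorial:ℝ) := Nat.choose_le_pow_div ℓ r
  have key : (r.choose ℓ : ℝ) ≤ (r:ℝ)^(-C) * (ℓ.factorial:ℝ) := by
    rw [Real.rpow_neg hr0.le, inv_mul_eq_div, le_div_iff₀ hrCpos]
    calc (r.choose ℓ : ℝ) * (r:ℝ)^C ≤ ((r:ℝ)^ℓ / (ℓ.factorial:ℝ)) * (r:ℝ)^C :=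
          mul_le_mul_of_nonneg_right hchoose hrCpos.le
      _ = ((r:ℝ)^C * (r:ℝ)^ℓ) / (ℓ.factorial:ℝ) := by ring
      _ ≤ ((ℓ.factorial:ℝ))^2 / (ℓ.factorial:ℝ) := by gcongr
      _ = (ℓ.factorial:ℝ) := by
          rw [sq]
          exact mul_div_cancel_right₀ _ (ne_of_gt hfactpos)
  have hid : (r.factorial : ℝ) = (r.choose ℓ : ℝ) * (ℓ.factorial:ℝ) * ((r-ℓ).factorial:ℝ) := by
    exact_mod_cast (Nat.choose_mul_factorial_mul_factorial hℓr).symm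
  have hrpowneg : (0:ℝ) ≤ (r:ℝ)^(-C) := Real.rpow_nonneg hr0.le _
  calc ((Finset.univ.filter fun p : Equiv.Perm (Fin r) × Equiv.Perm (Fin r) =>
        (3 * Real.sqrt r : ℝ) < (permLCS p.1 p.2 : ℝ)).card : ℝ)
      ≤ (r.choose ℓ : ℝ) * (r.choose ℓ : ℝ) *
          ((r.factorial : ℝ) * ((r - ℓ).factorial : ℝ)) := hcastcard
    _ ≤ ((r:ℝ)^(-C) * (ℓ.factorial:ℝ)) * (r.choose ℓ : ℝ) *
          ((r.factorial : ℝ) * ((r - ℓ).factorial : ℝ)) := by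
        gcongr
    _ = (r:ℝ)^(-C) * ((r.factorial : ℝ) *
          ((r.choose ℓ : ℝ) * (ℓ.factorial:ℝ) * ((r-ℓ).factorial:ℝ))) := by ring
    _ = (r:ℝ)^(-C) * ((r.factorial : ℝ) * (r.factorial : ℝ)) := by rw [← hid]
    _ = (r:ℝ)^(-C) * (r.factorial : ℝ)^2 := by ring
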